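/- With F_{a+1} the Fibonacci numbers (F_1 = F_2 = 1), the total sum Φ_a = Σ_{n} binomial(a-n,n)·n(a-(n-1))/2 satisfies Φ_a = Σ_{i+j+k=a+1, i,j,k ≥ 1} F_i·F_j·F_k for all a ≥ 2. -/

import Mathlib

open Finset

namespace TSFC

/-- double fibonacci convolution -/
def Hh (m : ℕ) : ℕ := ∑ i ∈ range (m+1), Nat.fib i * Nat.fib (m - i)

/-- triple fibonacci convolution -/
def Gg (m : ℕ) : ℕ := ∑ i ∈ range (m+1), Nat.fib i * Hh (m - i)

/-- LHS extended, with real subtraction -/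
def Lq (a : ℕ) : ℚ :=
  ∑ n ∈ range (a+1), (Nat.choose (a-n) n : ℚ) * n * ((a:ℚ) - n + 1) / 2

def S1q (a : ℕ) : ℚ := ∑ n ∈ range (a+1), (Nat.choose (a-n) n : ℚ) * n

def S0q (a : ℕ) : ℚ := ∑ n ∈ range (a+1), (Nat.choose (a-n) n : ℚ)

lemma choose_zero_of (a n : ℕ) (h : a < 2*n) : Nat.choose (a-n) n = 0 :=
  Nat.choose_eq_zero_of_lt (by omega)

lemma sum_ext (a N : ℕ) (h : a+1 ≤ N) (w : ℕ → ℚ) :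
    ∑ n ∈ range N, (Nat.choose (a-n) n : ℚ) * w n
      = ∑ n ∈ range (a+1), (Nat.choose (a-n) n : ℚ) * w n := by
  refine (Finset.sum_subset (by intro x hx; simp at *; omega) ?_).symm
  intro x hx hx2
  simp only [mem_range] at hx hx2
  rw [choose_zero_of a x (by omega)]
  simp

lemma pascal' (a n : ℕ) :
    Nat.choose (a+1-n) (n+1) = Nat.choose (a-n) n + Nat.choose (a-n) (n+1) := by
  rcases le_or_gt n a with h | h
  · have h1 : a+1-n = (a-n)+1 := by omega
    rw [h1, Nat.choose_succ_succ]
  · have h1 : a+1-n = 0 := by omega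
    have h2 : a-n = 0 := by omega
    rw [h1, h2]
    rw [Nat.choose_eq_zero_of_lt (by omega : 0 < n + 1), Nat.choose_eq_zero_of_lt (by omega : 0 < n)]

lemma pascal_sum (a : ℕ) (w : ℕ → ℚ) :
    ∑ n ∈ range (a+3), (Nat.choose (a+2-n) n : ℚ) * w n
      = (∑ n ∈ range (a+3), (Nat.choose (a+1-n) n : ℚ) * w n)
        + ∑ n ∈ range (a+3), (Nat.choose (a-n) n : ℚ) * w (n+1) := by
  rw [Finset.sum_range_succ' (fun n => (Nat.choose (a+2-n) n : ℚ) * w n),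
      Finset.sum_range_succ' (fun n => (Nat.choose (a+1-n) n : ℚ) * w n),
      Finset.sum_range_succ (fun n => (Nat.choose (a-n) n : ℚ) * w (n+1))]
  have hlast : ((Nat.choose (a-(a+2)) (a+2) : ℕ) : ℚ) * w (a+3) = 0 := by
    rw [choose_zero_of a (a+2) (by omega)]; simp
  have key : ∀ n ∈ range (a+2),
      ((Nat.choose (a+2-(n+1)) (n+1) : ℕ) : ℚ) * w (n+1)
        = ((Nat.choose (a+1-(n+1)) (n+1) : ℕ) : ℚ) * w (n+1)
          + ((Nat.choose (a-n) n : ℕ) : ℚ) * w (n+1) := by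
    intro n _
    have h1 : a+2-(n+1) = a+1-n := by omega
    have h2 : a+1-(n+1) = a-n := by omega
    rw [h1, h2, pascal' a n]
    push_cast
    ring
  rw [Finset.sum_congr rfl key, Finset.sum_add_distrib, hlast]
  simp only [Nat.sub_zero, Nat.choose_zero_right]
  push_cast
  ring

lemma S0q_eq (a : ℕ) : S0q a = (Nat.fib (a+1) : ℚ) := by
  induction a using Nat.twoStepInduction with
  | zero => simp [S0q]
  | one => simp [S0q, Finset.sum_range_succ]
  | more a ih1 ih2 =>
    have h := pascal_sum a (fun _ => 1)
    simp only [mul_one] at h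
    have e1 : ∑ n ∈ range (a+3), (Nat.choose (a+1-n) n : ℚ) = S0q (a+1) := by
      have := sum_ext (a+1) (a+3) (by omega) (fun _ => 1)
      simpa [S0q] using this
    have e2 : ∑ n ∈ range (a+3), (Nat.choose (a-n) n : ℚ) = S0q a := by
      have := sum_ext a (a+3) (by omega) (fun _ => 1)
      simpa [S0q] using this
    have : S0q (a+2) = S0q (a+1) + S0q a := by
      rw [S0q, h, e1, e2]
    rw [this, ih1, ih2]
    have f1 : Nat.fib (a+2+1) = Nat.fib (a+1) + Nat.fib (a+1+1) := Nat.fib_add_two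
    rw [f1]
    push_cast; ring

lemma S1q_rec (a : ℕ) : S1q (a+2) = S1q (a+1) + S1q a + (Nat.fib (a+1) : ℚ) := by
  have h := pascal_sum a (fun n => (n : ℚ))
  have e0 : S1q (a+2) = ∑ n ∈ range (a+3), (Nat.choose (a+2-n) n : ℚ) * n := rfl
  have e1 : ∑ n ∈ range (a+3), (Nat.choose (a+1-n) n : ℚ) * n = S1q (a+1) :=
    sum_ext (a+1) (a+3) (by omega) _
  have e2 : ∑ n ∈ range (a+3), (Nat.choose (a-n) n : ℚ) * ((n:ℚ)+1)
      = S1q a + S0q a := by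
    rw [sum_ext a (a+3) (by omega) (fun n => (n:ℚ)+1)]
    rw [S1q, S0q, ← Finset.sum_add_distrib]
    exact Finset.sum_congr rfl (fun n _ => by ring)
  rw [e0, h, e1]
  push_cast at e2 ⊢
  rw [e2, ← S0q_eq a]
  ring


lemma Hh_zero : Hh 0 = 0 := by simp [Hh]
lemma Hh_one : Hh 1 = 0 := by simp [Hh, Finset.sum_range_succ]
lemma Hh_two : Hh 2 = 1 := by simp [Hh, Finset.sum_range_succ]

lemma Hh_eq (m : ℕ) : Hh (m+1) = ∑ i ∈ range (m+1), Nat.fib i * Nat.fib (m+1-i) := by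
  rw [Hh, Finset.sum_range_succ]
  simp

lemma Gg_eq (m : ℕ) : Gg (m+1) = ∑ i ∈ range (m+1), Nat.fib i * Hh (m+1-i) := by
  rw [Gg, Finset.sum_range_succ]
  simp [Hh_zero]

lemma Hh_rec (m : ℕ) : Hh (m+2) = Hh (m+1) + Hh m + Nat.fib (m+1) := by
  have c1 : m+2-(m+1) = 1 := by omega
  have c2 : m+2-(m+2) = 0 := by omega
  have key : ∀ i ∈ range (m+1),
      Nat.fib i * Nat.fib (m+2-i)
        = Nat.fib i * Nat.fib (m+1-i) + Nat.fib i * Nat.fib (m-i) := by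
    intro i hi
    simp only [mem_range] at hi
    have h1 : m+2-i = (m-i)+2 := by omega
    have h2 : m+1-i = (m-i)+1 := by omega
    rw [h1, h2, Nat.fib_add_two, Nat.mul_add, Nat.add_comm (Nat.fib i * Nat.fib (m-i))]
  rw [Hh, Finset.sum_range_succ, Finset.sum_range_succ, c1, c2,
    Finset.sum_congr rfl key, Finset.sum_add_distrib, ← Hh_eq]
  simp [Hh]

lemma Gg_rec (m : ℕ) : Gg (m+2) = Gg (m+1) + Gg m + Hh (m+1) := by
  have c1 : m+2-(m+1) = 1 := by omega
  have c2 : m+2-(m+2) = 0 := by omega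
  have key : ∀ i ∈ range (m+1),
      Nat.fib i * Hh (m+2-i)
        = Nat.fib i * Hh (m+1-i) + Nat.fib i * Hh (m-i)
          + Nat.fib i * Nat.fib (m+1-i) := by
    intro i hi
    simp only [mem_range] at hi
    have h1 : m+2-i = (m-i)+2 := by omega
    have h2 : m+1-i = (m-i)+1 := by omega
    rw [h1, h2, Hh_rec]
    ring
  rw [Gg, Finset.sum_range_succ, Finset.sum_range_succ, c1, c2,
    Finset.sum_congr rfl key, Finset.sum_add_distrib, Finset.sum_add_distrib,
    ← Gg_eq, ← Hh_eq]
  simp [Hh_zero, Hh_one, Gg]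

/-- bridge : the inhomogeneous term of the LHS recurrence equals `Hh (a+2)` -/
lemma bridge (a : ℕ) :
    S1q (a+1) / 2 + ((a:ℚ)+2)/2 * (Nat.fib (a+1) : ℚ) = (Hh (a+2) : ℚ) := by
  induction a using Nat.twoStepInduction with
  | zero => simp [S1q, Finset.sum_range_succ, Hh_two]
  | one =>
    rw [Hh_rec, Hh_two, Hh_one]
    simp [S1q, Finset.sum_range_succ]
    norm_num
  | more a ih1 ih2 =>
    have hS := S1q_rec (a+1)
    have hH := Hh_rec (a+2)
    have f1 : Nat.fib (a+2+1) = Nat.fib (a+1) + Nat.fib (a+1+1) := Nat.fib_add_two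
    push_cast [hH, f1] at *
    linarith


lemma Lq_rec (a : ℕ) : Lq (a+2) = Lq (a+1) + Lq a + (Hh (a+2) : ℚ) := by
  have h := pascal_sum a (fun n => (n:ℚ) * (((a:ℚ)+3) - (n:ℚ))/2)
  have e0 : Lq (a+2) = ∑ n ∈ range (a+3),
      (Nat.choose (a+2-n) n : ℚ) * ((n:ℚ) * (((a:ℚ)+3) - (n:ℚ))/2) := by
    rw [Lq]
    refine Finset.sum_congr rfl fun n _ => ?_
    push_cast
    ring
  have e1 : ∑ n ∈ range (a+3), (Nat.choose (a+1-n) n : ℚ) * ((n:ℚ) * (((a:ℚ)+3) - (n:ℚ))/2)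
      = Lq (a+1) + S1q (a+1) / 2 := by
    rw [sum_ext (a+1) (a+3) (by omega)]
    rw [Lq, S1q, Finset.sum_div, ← Finset.sum_add_distrib]
    refine Finset.sum_congr rfl fun n _ => ?_
    push_cast
    ring
  have e2 : ∑ n ∈ range (a+3),
      (Nat.choose (a-n) n : ℚ) * (((n+1 : ℕ):ℚ) * (((a:ℚ)+3) - ((n+1:ℕ):ℚ))/2)
      = Lq a + ((a:ℚ)+2)/2 * S0q a := by
    rw [sum_ext a (a+3) (by omega)]
    rw [Lq, S0q, Finset.mul_sum, ← Finset.sum_add_distrib]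
    refine Finset.sum_congr rfl fun n _ => ?_
    push_cast
    ring
  rw [e0, h, e1, e2, S0q_eq]
  have hb := bridge a
  linarith

lemma main_id (a : ℕ) : Lq a = (Gg (a+1) : ℚ) := by
  induction a using Nat.twoStepInduction with
  | zero =>
    simp [Lq, Gg, Finset.sum_range_succ, Hh_zero, Hh_one]
  | one =>
    simp [Lq, Gg, Finset.sum_range_succ, Hh_zero, Hh_one, Hh_two]
  | more a ih1 ih2 =>
    have hG := Gg_rec (a+1)
    rw [Lq_rec, ih1, ih2]
    push_cast [hG]
    ring

lemma conv_eval (a : ℕ) :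
    ∑ p ∈ ((range (a+2)) ×ˢ (range (a+2)) ×ˢ (range (a+2))).filter
        (fun p : ℕ×ℕ×ℕ => p.1+p.2.1+p.2.2 = a+1),
      Nat.fib p.1 * Nat.fib p.2.1 * Nat.fib p.2.2 = Gg (a+1) := by
  rw [Finset.sum_filter, Finset.sum_product]
  have inner : ∀ i ∈ range (a+2),
      (∑ y ∈ (range (a+2)) ×ˢ (range (a+2)),
        if i + y.1 + y.2 = a+1 then Nat.fib i * Nat.fib y.1 * Nat.fib y.2 else 0)
      = Nat.fib i * Hh (a+1-i) := by
    intro i hi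
    rw [Finset.sum_product]
    have innerk : ∀ j ∈ range (a+2),
        (∑ k ∈ range (a+2), if i + j + k = a+1 then Nat.fib i * Nat.fib j * Nat.fib k else 0)
        = Nat.fib i * (Nat.fib j * Nat.fib (a+1-i-j)) := by
      intro j hj
      rcases le_or_gt (i+j) (a+1) with h | h
      · rw [Finset.sum_eq_single_of_mem (a+1-i-j) (Finset.mem_range.mpr (by omega))
          (fun b _ hb => if_neg (by omega)), if_pos (by omega)]
        ring
      · rw [Finset.sum_eq_zero (fun b _ => if_neg (by omega))]
        have h0 : a+1-i-j = 0 := by omega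
        rw [h0]
        simp
    rw [Finset.sum_congr rfl innerk, ← Finset.mul_sum]
    congr 1
    simp only [mem_range] at hi
    have hext : ∑ j ∈ range (a+2), Nat.fib j * Nat.fib (a+1-i-j)
        = ∑ j ∈ range (a+1-i+1), Nat.fib j * Nat.fib (a+1-i-j) := by
      refine (Finset.sum_subset ?_ ?_).symm
      · intro x hx
        simp only [mem_range] at *
        omega
      · intro x hx hx2
        simp only [mem_range] at hx hx2
        have h0 : a+1-i-x = 0 := by omega
        rw [h0]
        simp
    rw [hext, Hh]
  rw [Finset.sum_congr rfl inner, Gg]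

lemma R_eq (a : ℕ) :
    ∑ p ∈ (Finset.Icc 1 a ×ˢ Finset.Icc 1 a ×ˢ Finset.Icc 1 a).filter
        (fun p : ℕ × ℕ × ℕ => p.1 + p.2.1 + p.2.2 = a + 1),
      Nat.fib p.1 * Nat.fib p.2.1 * Nat.fib p.2.2 = Gg (a+1) := by
  rw [← conv_eval a]
  apply Finset.sum_subset
  · intro p hp
    simp only [Finset.mem_filter, Finset.mem_product, Finset.mem_Icc, Finset.mem_range] at *
    omega
  · intro p hp hp2
    simp only [Finset.mem_filter, Finset.mem_product, Finset.mem_Icc, Finset.mem_range] at hp hp2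
    have h0 : p.1 = 0 ∨ p.2.1 = 0 ∨ p.2.2 = 0 := by omega
    rcases h0 with h | h | h <;> simp [h]

end TSFC

/-- `Σ_n C(a-n, n)·n(a-(n-1))/2 = Σ_{i+j+k=a+1, i,j,k ≥ 1} F_i F_j F_k`,
with `F` the Fibonacci numbers (`F_1 = F_2 = 1`). -/
theorem total_size_fibonacci_convolution (a : ℕ) (ha : 2 ≤ a) :
    (∑ n ∈ Finset.range (a / 2 + 1),
        (Nat.choose (a - n) n : ℚ) * n * ((a - (n - 1) : ℕ) : ℚ) / 2) =
      ∑ p ∈ (Finset.Icc 1 a ×ˢ Finset.Icc 1 a ×ˢ Finset.Icc 1 a).filter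
          (fun p : ℕ × ℕ × ℕ => p.1 + p.2.1 + p.2.2 = a + 1),
        ((Nat.fib p.1 * Nat.fib p.2.1 * Nat.fib p.2.2 : ℕ) : ℚ) := by
  have hL : (∑ n ∈ Finset.range (a / 2 + 1),
      (Nat.choose (a - n) n : ℚ) * n * ((a - (n - 1) : ℕ) : ℚ) / 2) = TSFC.Lq a := by
    rw [TSFC.Lq]
    have hsub : ∑ n ∈ Finset.range (a+1),
        (Nat.choose (a-n) n : ℚ) * n * ((a:ℚ) - n + 1) / 2
        = ∑ n ∈ Finset.range (a/2+1),
        (Nat.choose (a-n) n : ℚ) * n * ((a:ℚ) - n + 1) / 2 := by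
      refine (Finset.sum_subset ?_ ?_).symm
      · intro x hx
        simp only [Finset.mem_range] at *
        omega
      · intro x hx hx2
        simp only [Finset.mem_range] at hx hx2
        rw [TSFC.choose_zero_of a x (by omega)]
        simp
    rw [hsub]
    refine (Finset.sum_congr rfl fun n hn => ?_)
    simp only [Finset.mem_range] at hn
    rcases n with _ | m
    · simp
    · have h1 : a - (m+1-1) = a - m := by omega
      have h2 : ((a - m : ℕ) : ℚ) = (a:ℚ) - (m:ℚ) := by
        rw [Nat.cast_sub (by omega)]
      rw [h1, h2]
      push_cast
      ring
  rw [hL, TSFC.main_id a, ← TSFC.R_eq a]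
  push_cast
  rfl
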